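/- Let h, w be positive integers and let λ ∈ Y_{h,w} have width 𝗐(λ) = w. Then each of the sequences λ^{(1)}, …, λ^{(w)} is a well-defined Young diagram in Y_{h,w} (i.e., each defining transpose sequence is weakly decreasing and fits in the box), and there is a strictly decreasing chain of containments λ ⊋ λ^{(1)} ⊋ λ^{(2)} ⊋ ⋯ ⊋ λ^{(w)}, where containment means componentwise inequality of the sequences. -/
import Mathlib


/-- A Young diagram in an `h × w` box: an antitone sequence of `h` natural numbers,
each at most `w`. -/
def Ydiag (h w : ℕ) : Type :=
  {f : Fin h → ℕ // Antitone f ∧ ∀ i, f i ≤ w}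

/-- The sequence `(λ_2, …, λ_h, 0)` obtained by deleting the first row. -/
def shiftSeq (h : ℕ) (f : Fin h → ℕ) : Fin h → ℕ :=
  fun i => if hi : (i : ℕ) + 1 < h then f ⟨(i : ℕ) + 1, hi⟩ else 0

lemma shiftSeq_antitone {h : ℕ} {f : Fin h → ℕ} (hf : Antitone f) :
    Antitone (shiftSeq h f) := by
  intro i j hij
  unfold shiftSeq
  by_cases hj : (j : ℕ) + 1 < h
  · have hi : (i : ℕ) + 1 < h := by
      have := Fin.le_def.mp hij; omega
    rw [dif_pos hj, dif_pos hi]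
    exact hf (Fin.mk_le_mk.mpr (Nat.succ_le_succ (Fin.le_def.mp hij)))
  · simp [hj]

/-- The cyclic action `g` on `Y_{h,w}`: add a full column if the width is less than `w`,
otherwise delete the first row. -/
def gY {h w : ℕ} (lam : Ydiag h w) : Ydiag h w :=
  if hw : ∀ i, lam.1 i < w then
    ⟨fun i => lam.1 i + 1,
      fun i j hij => by simpa using lam.2.1 hij,
      fun i => hw i⟩
  else
    ⟨shiftSeq h lam.1, shiftSeq_antitone lam.2.1, by
      intro i
      unfold shiftSeq
      by_cases hi : (i : ℕ) + 1 < h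
      · simpa [hi] using lam.2.2 _
      · simp [hi]⟩

/-- `λ` is upper-triangular: `λ_i ≤ w (h − i) / h` for all `1 ≤ i ≤ h`
(written multiplicatively, with `i` the 1-based index). -/
def UpperTri {h w : ℕ} (lam : Ydiag h w) : Prop :=
  ∀ i : Fin h, h * lam.1 i ≤ w * (h - 1 - (i : ℕ))

/-- The transpose of a sequence of row lengths: `(transposeFun h f) j` is the number of
rows of `f` of length at least `j + 1` (so, `1`-based, `μ_p = #{i : λ_i ≥ p}`). -/
def transposeFun (h : ℕ) (f : Fin h → ℕ) {w : ℕ} : Fin w → ℕ :=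
  fun j => (Finset.univ.filter (fun i : Fin h => (j : ℕ) < f i)).card

/-- The transposed sequence `ν^{(i)} = (μ_1, …, μ_{w−i}, μ_{w−i+2} − 1, …, μ_w − 1, 0)`
defining the diagram `λ^{(i)}`, where `μ = λ^T` (all `0`-indexed here). -/
def nuSeq (h w : ℕ) (f : Fin h → ℕ) (i : ℕ) : Fin w → ℕ :=
  fun p =>
    if (p : ℕ) < w - i then transposeFun h f p
    else if hp : (p : ℕ) < w - 1 then
      transposeFun h f (⟨(p : ℕ) + 1, by omega⟩ : Fin w) - 1
    else 0

/-- The diagram `λ^{(i)} = (ν^{(i)})^T`, as a sequence of `h` row lengths. -/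
def lamStep (h w : ℕ) (f : Fin h → ℕ) (i : ℕ) : Fin h → ℕ :=
  transposeFun w (nuSeq h w f i)


theorem card_filter_val_lt (h n : ℕ) (hn : n ≤ h) :
    (Finset.univ.filter fun q : Fin h => (q : ℕ) < n).card = n := by
  have : (Finset.univ.filter fun q : Fin h => (q : ℕ) < n) =
      (Finset.range n).attachFin (fun m hm => lt_of_lt_of_le (Finset.mem_range.mp hm) hn) := by
    ext q
    simp [Finset.mem_attachFin]
  rw [this, Finset.card_attachFin, Finset.card_range]

theorem transpose_antitone' {h w : ℕ} (f : Fin h → ℕ) :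
    Antitone (transposeFun h f (w := w)) := by
  intro p q hpq
  apply Finset.card_le_card
  intro i hi
  simp only [Finset.mem_filter, Finset.mem_univ, true_and] at *
  have : (p : ℕ) ≤ q := hpq
  omega

theorem transpose_le {h w : ℕ} (f : Fin h → ℕ) (p : Fin w) :
    transposeFun h f p ≤ h := by
  calc (Finset.univ.filter (fun i : Fin h => (p : ℕ) < f i)).card
      ≤ (Finset.univ : Finset (Fin h)).card := Finset.card_le_card (Finset.filter_subset _ _)
    _ = h := by simp

theorem transpose_mono {h w : ℕ} (f g : Fin w → ℕ) (hfg : ∀ p, f p ≤ g p) (q : Fin h) :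
    transposeFun w f q ≤ transposeFun w g q := by
  apply Finset.card_le_card
  intro p hp
  simp only [Finset.mem_filter, Finset.mem_univ, true_and] at *
  exact lt_of_lt_of_le hp (hfg p)

theorem sum_transpose {w h : ℕ} (ν : Fin w → ℕ) (hν : ∀ p, ν p ≤ h) :
    ∑ q : Fin h, transposeFun w ν q = ∑ p : Fin w, ν p := by
  unfold transposeFun
  simp_rw [Finset.card_filter]
  rw [Finset.sum_comm]
  apply Finset.sum_congr rfl
  intro p _
  rw [← Finset.card_filter]
  exact card_filter_val_lt h (ν p) (hν p)

theorem lower_card_iff {h : ℕ} (S : Finset (Fin h))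
    (hS : ∀ i j : Fin h, (j : ℕ) ≤ i → i ∈ S → j ∈ S) (q : Fin h) :
    (q : ℕ) < S.card ↔ q ∈ S := by
  constructor
  · intro hq
    by_contra hqS
    have hsub : S ⊆ Finset.univ.filter fun j : Fin h => (j : ℕ) < q := by
      intro i hi
      simp only [Finset.mem_filter, Finset.mem_univ, true_and]
      by_contra hlt
      exact hqS (hS i q (by omega) hi)
    have := Finset.card_le_card hsub
    rw [card_filter_val_lt h q (le_of_lt q.isLt)] at this
    omega
  · intro hq
    have hsub : (Finset.univ.filter fun j : Fin h => (j : ℕ) < (q : ℕ) + 1) ⊆ S := by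
      intro j hj
      simp only [Finset.mem_filter, Finset.mem_univ, true_and] at hj
      exact hS q j (by omega) hq
    have := Finset.card_le_card hsub
    rw [card_filter_val_lt h ((q : ℕ) + 1) q.isLt] at this
    omega

theorem transpose_transpose {h w : ℕ} (f : Fin h → ℕ) (hf : Antitone f)
    (hfw : ∀ i, f i ≤ w) : transposeFun w (transposeFun h f (w := w)) = f := by
  funext q
  have key : ∀ p : Fin w, ((q : ℕ) < transposeFun h f (w := w) p ↔ (p : ℕ) < f q) := by
    intro p
    unfold transposeFun
    rw [lower_card_iff _ (fun i j hij hi => by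
      simp only [Finset.mem_filter, Finset.mem_univ, true_and] at *
      exact lt_of_lt_of_le hi (hf (Fin.le_def.mpr hij))) q]
    simp
  show (Finset.univ.filter fun p : Fin w => (q : ℕ) < transposeFun h f (w := w) p).card = f q
  rw [Finset.filter_congr (fun p _ => by simpa using (key p))]
  exact card_filter_val_lt w (f q) (hfw q)

theorem lamStep_well_defined_and_strict_chain (h w : ℕ) (hh : 0 < h) (hw : 0 < w)
    (lam : Ydiag h w) (hwidth : lam.1 ⟨0, hh⟩ = w) :
    (∀ i : ℕ, 1 ≤ i → i ≤ w →
      Antitone (nuSeq h w lam.1 i) ∧ ∀ p : Fin w, nuSeq h w lam.1 i p ≤ h) ∧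
    ((∀ q : Fin h, lamStep h w lam.1 1 q ≤ lam.1 q) ∧ lamStep h w lam.1 1 ≠ lam.1) ∧
    (∀ i : ℕ, 1 ≤ i → i < w →
      (∀ q : Fin h, lamStep h w lam.1 (i + 1) q ≤ lamStep h w lam.1 i q) ∧
        lamStep h w lam.1 (i + 1) ≠ lamStep h w lam.1 i) := by
  set f := lam.1 with hfdef
  have fanti : Antitone f := lam.2.1
  have fle : ∀ i, f i ≤ w := lam.2.2
  have μanti : Antitone (transposeFun h f (w := w)) := transpose_antitone' f
  have μle : ∀ p : Fin w, transposeFun h f p ≤ h := fun p => transpose_le f p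
  have μpos : ∀ p : Fin w, 1 ≤ transposeFun h f p := by
    intro p
    apply Finset.card_pos.mpr
    refine ⟨⟨0, hh⟩, ?_⟩
    simp only [Finset.mem_filter, Finset.mem_univ, true_and]
    rw [hwidth]
    exact p.isLt
  have nu0 : nuSeq h w f 0 = transposeFun h f := by
    funext p
    simp [nuSeq, Nat.sub_zero, p.isLt]
  have nule : ∀ (i : ℕ) (p : Fin w), nuSeq h w f i p ≤ h := by
    intro i p
    unfold nuSeq
    split_ifs with h1 h2
    · exact μle p
    · exact le_trans (Nat.sub_le _ _) (μle _)
    · exact Nat.zero_le _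
  have nuanti : ∀ i : ℕ, Antitone (nuSeq h w f i) := by
    intro i p q hpq
    have hpq' : (p : ℕ) ≤ q := hpq
    unfold nuSeq
    by_cases h1 : (q : ℕ) < w - i
    · rw [if_pos h1, if_pos (show (p : ℕ) < w - i by omega)]
      exact μanti hpq
    · rw [if_neg h1]
      by_cases h3 : (q : ℕ) < w - 1
      · rw [dif_pos h3]
        by_cases h2 : (p : ℕ) < w - i
        · rw [if_pos h2]
          have := μanti (show p ≤ (⟨(q : ℕ) + 1, by omega⟩ : Fin w) from
            Fin.le_def.mpr (by simp; omega))
          omega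
        · rw [if_neg h2, dif_pos (show (p : ℕ) < w - 1 by omega)]
          have := μanti (show (⟨(p : ℕ) + 1, by omega⟩ : Fin w) ≤ ⟨(q : ℕ) + 1, by omega⟩ from
            Fin.le_def.mpr (by simp; omega))
          omega
      · rw [dif_neg h3]
        exact Nat.zero_le _
  have nustep : ∀ i : ℕ, ∀ p : Fin w, nuSeq h w f (i + 1) p ≤ nuSeq h w f i p := by
    intro i p
    unfold nuSeq
    by_cases h1 : (p : ℕ) < w - (i + 1)
    · rw [if_pos h1, if_pos (show (p : ℕ) < w - i by omega)]
    · rw [if_neg h1]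
      by_cases h2 : (p : ℕ) < w - i
      · rw [if_pos h2]
        by_cases h3 : (p : ℕ) < w - 1
        · rw [dif_pos h3]
          have := μanti (show p ≤ (⟨(p : ℕ) + 1, by omega⟩ : Fin w) from
            Fin.le_def.mpr (by simp))
          omega
        · rw [dif_neg h3]
          exact Nat.zero_le _
      · rw [if_neg h2]
  have nusum : ∀ i : ℕ, i < w →
      ∑ p : Fin w, nuSeq h w f (i + 1) p < ∑ p : Fin w, nuSeq h w f i p := by
    intro i hi
    apply Finset.sum_lt_sum (fun p _ => nustep i p)
    refine ⟨⟨w - i - 1, by omega⟩, Finset.mem_univ _, ?_⟩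
    unfold nuSeq
    rw [if_neg (by simp; omega), if_pos (by simp; omega)]
    by_cases h3 : w - i - 1 < w - 1
    · rw [dif_pos (by simpa using h3)]
      have h4 := μanti (show (⟨w - i - 1, by omega⟩ : Fin w) ≤ ⟨w - i - 1 + 1, by omega⟩ from
        Fin.le_def.mpr (by simp))
      have h5 := μpos (⟨w - i - 1, by omega⟩ : Fin w)
      simp only [Fin.val_mk]
      omega
    · rw [dif_neg (by simpa using h3)]
      exact μpos _
  have sumlam : ∀ i : ℕ, ∑ q : Fin h, lamStep h w f i q = ∑ p : Fin w, nuSeq h w f i p :=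
    fun i => sum_transpose _ (nule i)
  have lam0 : lamStep h w f 0 = f := by
    show transposeFun w (nuSeq h w f 0) = f
    rw [nu0]
    exact transpose_transpose f fanti fle
  refine ⟨fun i _ _ => ⟨nuanti i, nule i⟩, ⟨?_, ?_⟩, fun i hi1 hiw => ⟨?_, ?_⟩⟩
  · intro q
    have h1 : lamStep h w f 1 q ≤ lamStep h w f 0 q := transpose_mono _ _ (nustep 0) q
    rwa [lam0] at h1
  · intro heq
    have h1 := sumlam 1
    have h0 := sumlam 0
    have h2 : ∑ p : Fin w, nuSeq h w f 1 p < ∑ p : Fin w, nuSeq h w f 0 p := nusum 0 hw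
    have h3 : ∑ q : Fin h, lamStep h w f 0 q = ∑ q : Fin h, f q := by rw [lam0]
    rw [heq] at h1
    omega
  · intro q
    exact transpose_mono _ _ (nustep i) q
  · intro heq
    have h1 := sumlam (i + 1)
    have h0 := sumlam i
    rw [heq] at h1
    have := nusum i hiw
    omega
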